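/- For every natural number m ≥ 1 and every real x with 0 < x < 1, one has Q_m(x) < Q_{m+1}(x) < sin(πx). -/

import Mathlib

open Real

/-- The summand `a_{j,k} = (-π²/4)^k / (2j+2k)! · C(j+k, j)`. -/
noncomputable def a (j k : ℕ) : ℝ :=
  (-(π ^ 2) / 4) ^ k / (Nat.factorial (2 * j + 2 * k)) * (Nat.choose (j + k) j)

/-- `t_j = Σ_{k=0}^∞ a_{j,k}`. -/
noncomputable def t (j : ℕ) : ℝ := ∑' k : ℕ, a j k

/-- `Q_m(x) = Σ_{j=1}^m t_j π^{2j} (x(1 − x))^j`. -/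
noncomputable def Q (m : ℕ) (x : ℝ) : ℝ :=
  ∑ j ∈ Finset.Icc 1 m, t j * π ^ (2 * j) * (x * (1 - x)) ^ j

/- ### Auxiliary material -/

noncomputable def b (j k : ℕ) : ℝ :=
  (π ^ 2 / 4) ^ k * (Nat.choose (j + k) j) / (Nat.factorial (2 * j + 2 * k))

lemma pi_sq_lt_ten : π ^ 2 < 10 := by
  nlinarith [Real.pi_lt_d2, Real.pi_pos]

lemma b_pos (j k : ℕ) : 0 < b j k := by
  have h : 0 < (Nat.choose (j + k) j : ℝ) := by
    exact_mod_cast Nat.choose_pos (Nat.le_add_right j k)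
  have h2 : 0 < ((2 * j + 2 * k).factorial : ℝ) := by positivity
  have h3 : 0 < (π ^ 2 / 4 : ℝ) ^ k := by positivity
  unfold b
  positivity

lemma a_eq (j k : ℕ) : a j k = (-1) ^ k * b j k := by
  unfold a b
  rw [show (-(π ^ 2) / 4 : ℝ) = (-1) * (π ^ 2 / 4) by ring, mul_pow]
  ring

lemma b_succ_lt (j k : ℕ) (hj : 1 ≤ j) : b j (k + 1) < b j k := by
  have h1 : (j + k).choose k = (j + k).choose j := by
    simpa using (Nat.choose_symm (Nat.le_add_left k j)).symm
  have h2 : (j + k + 1).choose (k + 1) = (j + k + 1).choose j := by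
    simpa [show j + k + 1 - (k + 1) = j by omega] using
      (Nat.choose_symm (show k + 1 ≤ j + k + 1 by omega)).symm
  have h3 := Nat.add_one_mul_choose_eq (j + k) k
  rw [h1, h2] at h3
  have hchnat : (j + (k + 1)).choose j * (k + 1) = (j + k + 1) * ((j + k).choose j) := by
    rw [show j + (k + 1) = j + k + 1 by omega]
    exact h3.symm
  have hch : ((j + (k + 1)).choose j : ℝ) * ((k : ℝ) + 1)
      = ((j : ℝ) + k + 1) * ((j + k).choose j : ℝ) := by exact_mod_cast hchnat
  have hfacnat : (2 * j + 2 * (k + 1)).factorial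
      = (2 * j + 2 * k).factorial * ((2 * j + 2 * k + 1) * (2 * j + 2 * k + 2)) := by
    rw [show 2 * j + 2 * (k + 1) = (2 * j + 2 * k) + 1 + 1 by ring,
      Nat.factorial_succ, Nat.factorial_succ]
    ring
  have hfac : ((2 * j + 2 * (k + 1)).factorial : ℝ)
      = ((2 * j + 2 * k).factorial : ℝ) * ((2 * (j : ℝ) + 2 * k + 1) * (2 * (j : ℝ) + 2 * k + 2)) := by
    exact_mod_cast hfacnat
  set C1 : ℝ := ((j + k).choose j : ℝ) with hC1def
  set C2 : ℝ := ((j + (k + 1)).choose j : ℝ) with hC2def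
  set F : ℝ := ((2 * j + 2 * k).factorial : ℝ) with hFdef
  have hC1 : 1 ≤ C1 := by
    rw [hC1def]
    exact_mod_cast Nat.one_le_iff_ne_zero.mpr (Nat.choose_pos (Nat.le_add_right j k)).ne'
  have hF : 0 < F := by rw [hFdef]; positivity
  have hj1 : (1 : ℝ) ≤ (j : ℝ) := by exact_mod_cast hj
  have hk0 : (0 : ℝ) ≤ (k : ℝ) := Nat.cast_nonneg k
  have key : (π ^ 2 / 4) * C2 < C1 * ((2 * (j : ℝ) + 2 * k + 1) * (2 * (j : ℝ) + 2 * k + 2)) := by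
    have hk1 : (0 : ℝ) < (k : ℝ) + 1 := by positivity
    rw [← mul_lt_mul_iff_of_pos_right hk1]
    have hq : π ^ 2 / 4 < 3 := by nlinarith [pi_sq_lt_ten]
    calc (π ^ 2 / 4) * C2 * ((k : ℝ) + 1) = (π ^ 2 / 4) * (((j : ℝ) + k + 1) * C1) := by
          rw [mul_assoc, hch]
      _ < 3 * (((j : ℝ) + k + 1) * C1) := by
          apply mul_lt_mul_of_pos_right hq
          nlinarith [hC1, hj1, hk0]
      _ = C1 * (3 * ((j : ℝ) + k + 1)) := by ring
      _ ≤ C1 * ((2 * (j : ℝ) + 2 * k + 1) * (2 * (j : ℝ) + 2 * k + 2) * ((k : ℝ) + 1)) := by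
          apply mul_le_mul_of_nonneg_left _ (le_trans zero_le_one hC1)
          nlinarith [hj1, hk0, mul_nonneg hk0 hk0, mul_nonneg hk0 (le_trans zero_le_one hj1)]
      _ = C1 * ((2 * (j : ℝ) + 2 * k + 1) * (2 * (j : ℝ) + 2 * k + 2)) * ((k : ℝ) + 1) := by
          ring
  have hpos2 : (0 : ℝ) < ((2 * j + 2 * (k + 1)).factorial : ℝ) := by positivity
  unfold b
  rw [div_lt_div_iff₀ hpos2 hF]
  rw [← hC1def, ← hC2def, hfac]
  calc (π ^ 2 / 4) ^ (k + 1) * C2 * F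
      = ((π ^ 2 / 4) ^ k * F) * ((π ^ 2 / 4) * C2) := by rw [pow_succ]; ring
    _ < ((π ^ 2 / 4) ^ k * F) * (C1 * ((2 * (j : ℝ) + 2 * k + 1) * (2 * (j : ℝ) + 2 * k + 2))) := by
        apply mul_lt_mul_of_pos_left key
        positivity
    _ = (π ^ 2 / 4) ^ k * C1 * (F * ((2 * (j : ℝ) + 2 * k + 1) * (2 * (j : ℝ) + 2 * k + 2))) := by
        ring

lemma abs_a_le (j k : ℕ) :
    |a j k| ≤ (π ^ 2 / 4) ^ k / ((j.factorial : ℝ) * k.factorial) := by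
  have hfacpos : (0 : ℝ) < ((2 * j + 2 * k).factorial : ℝ) := by positivity
  have hjk : ((j + k).choose j : ℝ) * ((j.factorial : ℝ) * k.factorial)
      ≤ ((2 * j + 2 * k).factorial : ℝ) := by
    have hn : (j + k).choose j * j.factorial * k.factorial = (j + k).factorial := by
      have := Nat.add_choose_mul_factorial_mul_factorial k j
      rw [Nat.add_comm k j] at this
      rw [show (j + k).choose j * j.factorial * k.factorial
        = (j + k).choose j * j.factorial * k.factorial from rfl]
      calc (j + k).choose j * j.factorial * k.factorial
          = (j + k).choose j * k.factorial * j.factorial := by ring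
        _ = (j + k).factorial := this
    have hle : (j + k).factorial ≤ (2 * j + 2 * k).factorial :=
      Nat.factorial_le (by omega)
    have : (j + k).choose j * (j.factorial * k.factorial) ≤ (2 * j + 2 * k).factorial := by
      rw [← Nat.mul_assoc, hn]; exact hle
    exact_mod_cast this
  rw [a_eq, abs_mul, abs_pow, abs_neg, abs_one, one_pow, one_mul,
    abs_of_pos (b_pos j k)]
  unfold b
  rw [div_le_div_iff₀ hfacpos (by positivity)]
  calc (π ^ 2 / 4) ^ k * ((j + k).choose j : ℝ) * ((j.factorial : ℝ) * k.factorial)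
      = (π ^ 2 / 4) ^ k * (((j + k).choose j : ℝ) * ((j.factorial : ℝ) * k.factorial)) := by ring
    _ ≤ (π ^ 2 / 4) ^ k * ((2 * j + 2 * k).factorial : ℝ) := by
        apply mul_le_mul_of_nonneg_left hjk (by positivity)

lemma summable_bound (j : ℕ) :
    Summable fun k : ℕ => (π ^ 2 / 4) ^ k / ((j.factorial : ℝ) * k.factorial) := by
  have := (Real.summable_pow_div_factorial (π ^ 2 / 4)).mul_left (1 / (j.factorial : ℝ))
  refine this.congr fun k => ?_
  field_simp

lemma summable_a (j : ℕ) : Summable (a j) := by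
  refine Summable.of_abs (Summable.of_nonneg_of_le (fun k => abs_nonneg _)
    (fun k => abs_a_le j k) (summable_bound j))

lemma t_pos (j : ℕ) (hj : 1 ≤ j) : 0 < t j := by
  have hE : Summable fun k => a j (2 * k) :=
    (summable_a j).comp_injective (fun m n h => by omega)
  have hO : Summable fun k => a j (2 * k + 1) :=
    (summable_a j).comp_injective (fun m n h => by omega)
  have hsum : HasSum (a j) ((∑' k, a j (2 * k)) + ∑' k, a j (2 * k + 1)) :=
    HasSum.even_add_odd hE.hasSum hO.hasSum
  have hpair : ∀ k, 0 < a j (2 * k) + a j (2 * k + 1) := by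
    intro k
    have h1 : a j (2 * k) = b j (2 * k) := by
      rw [a_eq, Even.neg_one_pow ⟨k, by ring⟩, one_mul]
    have h2 : a j (2 * k + 1) = -b j (2 * k + 1) := by
      rw [a_eq, Odd.neg_one_pow ⟨k, by ring⟩, neg_one_mul]
    rw [h1, h2]
    have := b_succ_lt j (2 * k) hj
    linarith
  have : t j = ∑' k, (a j (2 * k) + a j (2 * k + 1)) := by
    rw [t, hsum.tsum_eq, Summable.tsum_add hE hO]
  rw [this]
  exact Summable.tsum_pos (hE.add hO) (fun k => (hpair k).le) 0 (hpair 0)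

lemma t_zero : t 0 = 0 := by
  have h : ∀ k : ℕ, a 0 k = (-1) ^ k * (π / 2) ^ (2 * k) / ((2 * k).factorial : ℝ) := by
    intro k
    unfold a
    rw [Nat.choose_zero_right, show 2 * 0 + 2 * k = 2 * k by ring]
    rw [show (-(π ^ 2) / 4 : ℝ) = (-1) * (π / 2) ^ 2 by ring, mul_pow, ← pow_mul]
    push_cast
    ring
  have : t 0 = ∑' k : ℕ, (-1) ^ k * (π / 2) ^ (2 * k) / ((2 * k).factorial : ℝ) := by
    rw [t]; exact tsum_congr h
  rw [this, ← Real.cos_eq_tsum, Real.cos_pi_div_two]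

lemma tsum_antidiag {F : ℕ × ℕ → ℝ} (hF : Summable F) :
    ∑' p : ℕ × ℕ, F p = ∑' n : ℕ, ∑ kl ∈ Finset.HasAntidiagonal.antidiagonal n, F kl := by
  have h2 : Summable (F ∘ ⇑Finset.HasAntidiagonal.sigmaAntidiagonalEquivProd) :=
    Finset.HasAntidiagonal.sigmaAntidiagonalEquivProd.summable_iff.mpr hF
  have h3 := Summable.tsum_sigma' (f := F ∘ ⇑Finset.HasAntidiagonal.sigmaAntidiagonalEquivProd)
    (fun n => (hasSum_fintype _).summable) h2
  calc ∑' p : ℕ × ℕ, F p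
      = ∑' c : Σ n : ℕ, (Finset.HasAntidiagonal.antidiagonal n : Finset (ℕ × ℕ)),
          (F ∘ ⇑Finset.HasAntidiagonal.sigmaAntidiagonalEquivProd) c :=
        (Finset.HasAntidiagonal.sigmaAntidiagonalEquivProd.tsum_eq F).symm
    _ = ∑' (n : ℕ) (c : (Finset.HasAntidiagonal.antidiagonal n : Finset (ℕ × ℕ))),
          (F ∘ ⇑Finset.HasAntidiagonal.sigmaAntidiagonalEquivProd) ⟨n, c⟩ := h3
    _ = ∑' n : ℕ, ∑ kl ∈ Finset.HasAntidiagonal.antidiagonal n, F kl := by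
        refine tsum_congr fun n => ?_
        rw [tsum_fintype]
        exact Finset.sum_coe_sort (Finset.HasAntidiagonal.antidiagonal n) F

lemma sin_eq (x : ℝ) (hx1 : 0 ≤ x) (hx2 : x ≤ 1) :
    Real.sin (π * x) = ∑' j : ℕ, t j * π ^ (2 * j) * (x * (1 - x)) ^ j := by
  have hu0' : 0 ≤ x * (1 - x) := mul_nonneg hx1 (by linarith)
  obtain ⟨u, hu⟩ : ∃ u : ℝ, x * (1 - x) = u := ⟨_, rfl⟩
  rw [hu]
  have hu0 : 0 ≤ u := hu ▸ hu0'
  have hx : -u + (1/4 : ℝ) = (x - 1/2) ^ 2 := by rw [← hu]; ring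
  set F : ℕ × ℕ → ℝ := fun p => a p.1 p.2 * (π ^ (2 * p.1) * u ^ p.1) with hF
  -- summability
  have hbound : ∀ p : ℕ × ℕ,
      |F p| ≤ (π ^ 2 * u) ^ p.1 / (p.1.factorial : ℝ) * ((π ^ 2 / 4) ^ p.2 / (p.2.factorial : ℝ)) := by
    rintro ⟨j, k⟩
    have h1 : |F (j, k)| = |a j k| * (π ^ (2 * j) * u ^ j) := by
      rw [hF]; dsimp only
      rw [abs_mul, abs_of_nonneg (show (0:ℝ) ≤ π ^ (2 * j) * u ^ j by positivity)]
    rw [h1]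
    calc |a j k| * (π ^ (2 * j) * u ^ j)
        ≤ (π ^ 2 / 4) ^ k / ((j.factorial : ℝ) * k.factorial) * (π ^ (2 * j) * u ^ j) :=
          mul_le_mul_of_nonneg_right (abs_a_le j k) (by positivity)
      _ = (π ^ 2 * u) ^ j / (j.factorial : ℝ) * ((π ^ 2 / 4) ^ k / (k.factorial : ℝ)) := by
          rw [mul_pow, pow_mul]
          have hj0 : (j.factorial : ℝ) ≠ 0 := by positivity
          have hk0 : (k.factorial : ℝ) ≠ 0 := by positivity
          field_simp
  have hprod : Summable (fun p : ℕ × ℕ =>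
      (π ^ 2 * u) ^ p.1 / (p.1.factorial : ℝ) * ((π ^ 2 / 4) ^ p.2 / (p.2.factorial : ℝ))) := by
    apply Summable.mul_of_nonneg (Real.summable_pow_div_factorial (π ^ 2 * u))
      (Real.summable_pow_div_factorial (π ^ 2 / 4))
    · intro j; positivity
    · intro k; positivity
  have habs : Summable (fun p : ℕ × ℕ => |F p|) :=
    Summable.of_nonneg_of_le (fun p => abs_nonneg _) hbound hprod
  have hFs : Summable F := habs.of_abs
  -- the RHS
  have hR : ∑' p : ℕ × ℕ, F p = ∑' j : ℕ, t j * π ^ (2 * j) * u ^ j := by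
    rw [Summable.tsum_prod' hFs hFs.prod_factor]
    refine tsum_congr fun j => ?_
    rw [hF]; dsimp only
    rw [tsum_mul_right, ← mul_assoc]
    rfl
  -- the LHS : group along antidiagonals
  have hrow : ∀ n : ℕ, ∑ kl ∈ Finset.HasAntidiagonal.antidiagonal n, F kl
      = (-1) ^ n * (π * (x - 1/2)) ^ (2 * n) / ((2 * n).factorial : ℝ) := by
    intro n
    rw [Finset.Nat.sum_antidiagonal_eq_sum_range_succ_mk]
    have expand : ∀ j ∈ Finset.range (n + 1),
        F (j, n - j) = ((-1) ^ n * π ^ (2 * n) / ((2 * n).factorial : ℝ)) *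
          ((-u) ^ j * (1/4 : ℝ) ^ (n - j) * (n.choose j : ℝ)) := by
      intro j hj
      rw [Finset.mem_range] at hj
      obtain ⟨m, hm⟩ : ∃ m, n = j + m := ⟨n - j, by omega⟩
      subst hm
      rw [hF]; dsimp only
      rw [show j + m - j = m by omega]
      unfold a
      rw [show 2 * j + 2 * m = 2 * (j + m) by ring]
      rw [show (-(π ^ 2) / 4 : ℝ) = (-1) * (π ^ 2 * (1/4)) by ring, mul_pow, mul_pow,
        neg_pow u j, pow_add ((-1 : ℝ)) j m, pow_mul π 2, pow_mul π 2,
        pow_add ((π:ℝ) ^ 2) j m]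
      have hsq : ((-1 : ℝ)) ^ j * (-1 : ℝ) ^ j = 1 := by
        rw [← pow_add, ← two_mul, pow_mul]; norm_num
      have hfac0 : (((2 * (j + m)).factorial : ℕ) : ℝ) ≠ 0 := by positivity
      field_simp
      linear_combination (-((j + m).choose j : ℝ) * u ^ j) * hsq
    rw [Finset.sum_congr rfl expand, ← Finset.mul_sum]
    rw [← Commute.add_pow (Commute.all (-u) (1/4 : ℝ)) n]
    rw [hx, mul_pow π (x - 1/2), pow_mul (x - 1/2) 2]
    ring
  have hL : ∑' p : ℕ × ℕ, F p = Real.sin (π * x) := by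
    rw [tsum_antidiag hFs]
    rw [tsum_congr hrow, ← Real.cos_eq_tsum (π * (x - 1/2))]
    rw [show π * (x - 1/2) = π * x - π/2 by ring]
    rw [Real.cos_sub_pi_div_two]
  rw [← hL, hR]

lemma abs_t_le (j : ℕ) :
    |t j| ≤ (∑' k : ℕ, (π ^ 2 / 4) ^ k / ((k.factorial : ℕ) : ℝ)) * (1 / (j.factorial : ℝ)) := by
  have h1 : |t j| ≤ ∑' k, |a j k| := by
    have := norm_tsum_le_tsum_norm (f := a j) ((summable_a j).abs.congr (fun k => rfl))
    simpa [Real.norm_eq_abs, t] using this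
  have h2 : ∑' k, |a j k| ≤ ∑' k : ℕ, (π ^ 2 / 4) ^ k / ((j.factorial : ℝ) * k.factorial) :=
    Summable.tsum_le_tsum (fun k => abs_a_le j k) ((summable_a j).abs.congr (fun k => rfl))
      (summable_bound j)
  have h3 : ∑' k : ℕ, (π ^ 2 / 4) ^ k / ((j.factorial : ℝ) * k.factorial)
      = (∑' k : ℕ, (π ^ 2 / 4) ^ k / ((k.factorial : ℕ) : ℝ)) * (1 / (j.factorial : ℝ)) := by
    rw [← tsum_mul_right]
    refine tsum_congr fun k => ?_
    have hj0 : (j.factorial : ℝ) ≠ 0 := by positivity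
    have hk0 : (k.factorial : ℝ) ≠ 0 := by positivity
    field_simp
  exact h1.trans (h2.trans h3.le)

lemma summable_f (u : ℝ) (hu0 : 0 ≤ u) :
    Summable (fun j : ℕ => t j * π ^ (2 * j) * u ^ j) := by
  set S : ℝ := ∑' k : ℕ, (π ^ 2 / 4) ^ k / ((k.factorial : ℕ) : ℝ) with hS
  have hmaj : Summable (fun j : ℕ => S * ((π ^ 2 * u) ^ j / (j.factorial : ℝ))) :=
    (Real.summable_pow_div_factorial (π ^ 2 * u)).mul_left S
  refine Summable.of_abs (Summable.of_nonneg_of_le (fun j => abs_nonneg _) (fun j => ?_) hmaj)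
  have h1 : |t j * π ^ (2 * j) * u ^ j| = |t j| * (π ^ (2 * j) * u ^ j) := by
    rw [mul_assoc, abs_mul, abs_of_nonneg (show (0:ℝ) ≤ π ^ (2 * j) * u ^ j by positivity)]
  rw [h1]
  calc |t j| * (π ^ (2 * j) * u ^ j)
      ≤ S * (1 / (j.factorial : ℝ)) * (π ^ (2 * j) * u ^ j) :=
        mul_le_mul_of_nonneg_right (abs_t_le j) (by positivity)
    _ = S * ((π ^ 2 * u) ^ j / (j.factorial : ℝ)) := by
        rw [mul_pow, pow_mul]
        ring

set_option maxHeartbeats 1000000 in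
/-- For `m ≥ 1` and `0 < x < 1`, `Q_m(x) < Q_{m+1}(x) < sin(πx)`. -/
theorem Q_lt_Q_succ_lt_sin (m : ℕ) (hm : 1 ≤ m) (x : ℝ) (hx1 : 0 < x) (hx2 : x < 1) :
    Q m x < Q (m + 1) x ∧ Q (m + 1) x < Real.sin (π * x) := by
  have hu : 0 < x * (1 - x) := mul_pos hx1 (by linarith)
  have hfpos : ∀ j : ℕ, 1 ≤ j → 0 < t j * π ^ (2 * j) * (x * (1 - x)) ^ j := by
    intro j hj
    have := t_pos j hj
    have hp : (0:ℝ) < π ^ (2 * j) := by positivity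
    have hq : (0:ℝ) < (x * (1 - x)) ^ j := pow_pos hu j
    positivity
  constructor
  · have hstep : Q (m + 1) x = Q m x + t (m + 1) * π ^ (2 * (m + 1)) * (x * (1 - x)) ^ (m + 1) := by
      unfold Q
      rw [Finset.sum_Icc_succ_top (by omega : 1 ≤ m + 1)]
    rw [hstep]
    linarith [hfpos (m + 1) (by omega)]
  · have hf : Summable (fun j : ℕ => t j * π ^ (2 * j) * (x * (1 - x)) ^ j) :=
      summable_f (x * (1 - x)) hu.le
    have hsin : Real.sin (π * x) = ∑' j : ℕ, t j * π ^ (2 * j) * (x * (1 - x)) ^ j :=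
      sin_eq x hx1.le hx2.le
    have hQ : Q (m + 1) x = ∑ j ∈ Finset.range (m + 2), t j * π ^ (2 * j) * (x * (1 - x)) ^ j := by
      unfold Q
      rw [Finset.range_eq_Ico, Finset.sum_eq_sum_Ico_succ_bot (by omega : 0 < m + 2)]
      rw [t_zero, zero_mul, zero_mul, zero_add]
      congr 1
    have hdecomp := hf.sum_add_tsum_nat_add (m + 2)
    have htail : 0 < ∑' i : ℕ, t (i + (m + 2)) * π ^ (2 * (i + (m + 2))) * (x * (1 - x)) ^ (i + (m + 2)) := by
      refine Summable.tsum_pos ((summable_nat_add_iff (m + 2)).mpr hf)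
        (fun i => (hfpos (i + (m + 2)) (by omega)).le) 0 (hfpos (0 + (m + 2)) (by omega))
    rw [hsin, ← hdecomp, hQ]
    linarith
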